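/- Removal of the space-time singularity for the vorticity formulation: let μ > 1, A > 0, and set r = 1 + μ (so r > 2). Let u : ℝ² × [0,∞) → ℝ² be measurable with |u(x,t)| ≤ A·|x|^{1−1/μ} for all x ≠ 0 and t ≥ 0, and let w : ℝ² × [0,∞) → ℝ be measurable such that for every R > 0: sup_{t ≥ 0} ‖w(·,t)‖_{L^r(B(0,R))} < ∞ and ‖w(·,t) − w(·,0)‖_{L^r(B(0,R))} → 0 as t → 0⁺. Assume that for every s > 0 and every F ∈ C_c^∞((ℝ²∖{0}) × [0,∞); ℝ): ∫_{ℝ²} w(x,s)·F(x,s) dx + ∫_s^∞∫_{ℝ²} w·∂_tF + w·(u·∇F) dx dt = 0. Then for every f ∈ C_c^∞(ℝ² × [0,∞); ℝ): ∫_{ℝ²} w(x,0)·f(x,0) dx + ∫₀^∞∫_{ℝ²} w·∂_tf + w·(u·∇f) dx dt = 0. -/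

import Mathlib

open Set MeasureTheory Filter
open scoped ENNReal

noncomputable section

/-- Real dot product on ℝ² realized as ℂ. -/
def dotR (a b : ℂ) : ℝ := a.re * b.re + a.im * b.im

/-- Gradient of a scalar function on ℝ² ≅ ℂ. -/
def grad2 (f : ℂ → ℝ) (x : ℂ) : ℂ := ⟨fderiv ℝ f x 1, fderiv ℝ f x Complex.I⟩

section aux
open Metric Function

lemma dotR_expand (a : ℂ) (p q : ℝ) : dotR a ⟨p, q⟩ = a.re * p + a.im * q := rfl

lemma grad2_def (f : ℂ → ℝ) (x : ℂ) :
    grad2 f x = ⟨fderiv ℝ f x 1, fderiv ℝ f x Complex.I⟩ := rfl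

/-- Master Hölder estimate used repeatedly. -/
lemma holder_key {ν : Measure ℂ} {p q : ℝ≥0∞} (hpq : 1/(1:ℝ≥0∞) = 1/p + 1/q)
    (hq0 : q ≠ 0) (hqt : q ≠ ∞)
    (v G : ℂ → ℝ) (hv : AEStronglyMeasurable v ν) (hG : AEStronglyMeasurable G ν)
    (N : ℝ≥0∞) (hN : eLpNorm v p ν ≤ N) (hNt : N ≠ ⊤)
    (C : ℝ) (hC : 0 ≤ C) (ρ : ℝ)
    (hGbd : ∀ᵐ x ∂ν, |G x| ≤ C) (hGs : ∀ x, x ∉ ball (0:ℂ) ρ → G x = 0)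
    (hν : ν (ball (0:ℂ) ρ) ≤ volume (ball (0:ℂ) ρ)) :
    Integrable (fun x => v x * G x) ν ∧
      |∫ x, v x * G x ∂ν| ≤
        N.toReal * (C * ((volume (ball (0:ℂ) ρ)).toReal) ^ (1/q.toReal)) := by
  have he : (0:ℝ) ≤ 1/q.toReal := by positivity
  have hGind : ∀ᵐ x ∂ν, ‖G x‖ ≤ ‖(ball (0:ℂ) ρ).indicator (fun _ => C) x‖ := by
    filter_upwards [hGbd] with x hx
    by_cases h : x ∈ ball (0:ℂ) ρ
    · simpa [h, Real.norm_eq_abs, abs_of_nonneg hC] using hx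
    · simp [h, hGs x h, Real.norm_eq_abs]
  have eG : eLpNorm G q ν ≤ ENNReal.ofReal C * (volume (ball (0:ℂ) ρ)) ^ (1/q.toReal) := by
    refine (eLpNorm_mono_ae hGind).trans ?_
    rw [eLpNorm_indicator_const measurableSet_ball hq0 hqt]
    have : ‖C‖ₑ = ENNReal.ofReal C := Real.enorm_eq_ofReal hC
    rw [this]
    exact mul_le_mul_right (ENNReal.rpow_le_rpow hν he) _
  have e1 : eLpNorm (fun x => v x * G x) 1 ν ≤
      N * (ENNReal.ofReal C * (volume (ball (0:ℂ) ρ)) ^ (1/q.toReal)) := by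
    refine (eLpNorm_le_eLpNorm_mul_eLpNorm'_of_norm hv hG (· * ·) 1
      (Eventually.of_forall fun x => by simp [norm_mul])
      (hpqr := ⟨by simpa [one_div] using hpq.symm⟩)).trans ?_
    rw [ENNReal.coe_one, one_mul]
    exact mul_le_mul' hN eG
  have hvolt : (volume (ball (0:ℂ) ρ)) ^ (1/q.toReal) ≠ ⊤ :=
    (ENNReal.rpow_lt_top_of_nonneg he measure_ball_lt_top.ne).ne
  have hTt : N * (ENNReal.ofReal C * (volume (ball (0:ℂ) ρ)) ^ (1/q.toReal)) ≠ ⊤ :=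
    ENNReal.mul_ne_top hNt (ENNReal.mul_ne_top ENNReal.ofReal_ne_top hvolt)
  have hint : Integrable (fun x => v x * G x) ν :=
    memLp_one_iff_integrable.mp ⟨hv.mul hG, lt_of_le_of_lt e1 (lt_top_iff_ne_top.2 hTt)⟩
  refine ⟨hint, ?_⟩
  have h2 : ‖∫ x, v x * G x ∂ν‖ ≤ (eLpNorm (fun x => v x * G x) 1 ν).toReal := by
    rw [eLpNorm_one_eq_lintegral_enorm]
    calc ‖∫ x, v x * G x ∂ν‖ ≤ ∫ x, ‖v x * G x‖ ∂ν := norm_integral_le_integral_norm _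
      _ = (∫⁻ x, ‖v x * G x‖ₑ ∂ν).toReal := by
          rw [integral_norm_eq_lintegral_enorm hint.aestronglyMeasurable]
  rw [Real.norm_eq_abs] at h2
  refine h2.trans ?_
  calc (eLpNorm (fun x => v x * G x) 1 ν).toReal
      ≤ (N * (ENNReal.ofReal C * (volume (ball (0:ℂ) ρ)) ^ (1/q.toReal))).toReal :=
        ENNReal.toReal_mono hTt e1
    _ = N.toReal * (C * ((volume (ball (0:ℂ) ρ)).toReal) ^ (1/q.toReal)) := by
        rw [ENNReal.toReal_mul, ENNReal.toReal_mul, ENNReal.toReal_ofReal hC,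
          ← ENNReal.toReal_rpow]

lemma vol_ball_toReal (ρ : ℝ) (hρ : 0 ≤ ρ) :
    (volume (ball (0:ℂ) ρ)).toReal = ρ^2 * Real.pi := by
  rw [Complex.volume_ball, ENNReal.toReal_mul, ENNReal.toReal_pow,
    ENNReal.toReal_ofReal hρ]
  congr 1

/-- The term-3 bound tends to zero. -/
lemma tendsto_bk (μ : ℝ) (hμ : 1 < μ) (Cf A Cb Mr : ℝ) :
    Tendsto (fun k : ℕ =>
      Mr * ((Cf * (A * (3*((k:ℝ)+1)⁻¹)^(1-1/μ)) * (2*(((k:ℝ)+1)*Cb)))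
        * ((volume (ball (0:ℂ) (3*((k:ℝ)+1)⁻¹))).toReal ^ (μ/(1+μ))))) atTop (nhds 0) := by
  have hμ0 : (0:ℝ) < μ := by linarith
  have h1μ : (0:ℝ) < 1 + μ := by linarith
  set e : ℝ := μ/(1+μ) with he
  set a : ℝ := (1-1/μ) + (-1) + 2*e with ha
  have hapos : 0 < a := by
    rw [ha, he]
    have h2 : 2*μ^2 - (1+μ) > 0 := by nlinarith
    have : (1-1/μ) + (-1) + 2*(μ/(1+μ)) = (2*μ^2 - (1+μ))/(μ*(1+μ)) := by field_simp; ring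
    rw [this]; positivity
  set CC : ℝ := Mr * (Cf * (A * 3^(1-1/μ)) * (2*Cb) * ((9*Real.pi)^e)) with hCC
  have key : ∀ δ : ℝ, 0 < δ →
      Mr * ((Cf * (A * (3*δ)^(1-1/μ)) * (2*(δ⁻¹*Cb)))
        * ((volume (ball (0:ℂ) (3*δ))).toReal ^ e)) = CC * δ ^ a := by
    intro δ hδ
    rw [vol_ball_toReal _ (by positivity)]
    have h2 : (3*δ)^(1-1/μ) = 3^(1-1/μ) * δ^(1-1/μ) :=
      Real.mul_rpow (by norm_num) hδ.le
    have h3 : (3*δ)^2 * Real.pi = 9 * Real.pi * δ^(2:ℕ) := by ring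
    have h4 : ((9*Real.pi) * δ^(2:ℕ)) ^ e = (9*Real.pi)^e * (δ^(2:ℕ))^e :=
      Real.mul_rpow (by positivity) (by positivity)
    have h5 : (δ^(2:ℕ))^e = δ^(2*e) := by
      rw [← Real.rpow_natCast δ 2, ← Real.rpow_mul hδ.le]; norm_num
    have h6 : δ⁻¹ = δ^(-1:ℝ) := by rw [Real.rpow_neg_one]
    rw [h2, h3, h4, h5, h6, hCC, ha,
      show (1-1/μ) + (-1) + 2*e = (1-1/μ) + ((-1) + 2*e) by ring,
      Real.rpow_add hδ ((1:ℝ)-1/μ) ((-1:ℝ)+2*e), Real.rpow_add hδ (-1:ℝ) (2*e)]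
    ring
  have heq : (fun k : ℕ =>
      Mr * ((Cf * (A * (3*((k:ℝ)+1)⁻¹)^(1-1/μ)) * (2*(((k:ℝ)+1)*Cb)))
        * ((volume (ball (0:ℂ) (3*((k:ℝ)+1)⁻¹))).toReal ^ e)))
      = fun k : ℕ => CC * (((k:ℝ)+1)⁻¹) ^ a := by
    funext k
    have := key (((k:ℝ)+1)⁻¹) (by positivity)
    rw [inv_inv] at this
    exact this
  rw [heq]
  have hδ0 : Tendsto (fun k : ℕ => ((k:ℝ)+1)⁻¹) atTop (nhds 0) :=
    tendsto_one_div_add_atTop_nhds_zero_nat.congr (by intro k; rw [one_div])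
  have hc : ContinuousAt (fun x : ℝ => x ^ a) 0 :=
    Real.continuousAt_rpow_const 0 a (Or.inr hapos.le)
  have h := (hc.tendsto.comp hδ0)
  rw [show ((0:ℝ)^a) = 0 from Real.zero_rpow hapos.ne'] at h
  simpa using h.const_mul CC

section cutoff
variable (b : ContDiffBump (0:ℂ))

lemma chi_smooth (c : ℝ) : ContDiff ℝ (⊤:ℕ∞) (fun x : ℂ => 1 - b (c • x)) :=
  contDiff_const.sub (b.contDiff.comp (contDiff_const_smul c))

lemma chi_zero (hIn : b.rIn = 1) (c : ℝ) (hc : 1 ≤ c) (x : ℂ) (hx : ‖x‖ ≤ 1/c) :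
    1 - b (c • x) = 0 := by
  have hc0 : (0:ℝ) < c := by linarith
  have h : b (c • x) = 1 := by
    refine b.one_of_mem_closedBall ?_
    rw [hIn, mem_closedBall, dist_zero_right, norm_smul, Real.norm_eq_abs, abs_of_pos hc0]
    calc c * ‖x‖ ≤ c * (1/c) := mul_le_mul_of_nonneg_left hx hc0.le
      _ = 1 := by field_simp
  rw [h]; ring

lemma chi_one (hOut : b.rOut = 2) (c : ℝ) (hc : 1 ≤ c) (x : ℂ) (hx : 2/c ≤ ‖x‖) :
    1 - b (c • x) = 1 := by
  have hc0 : (0:ℝ) < c := by linarith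
  have h : b (c • x) = 0 := by
    have hmem : c • x ∉ support (b : ℂ → ℝ) := by
      rw [b.support_eq, hOut, mem_ball, dist_zero_right, norm_smul, Real.norm_eq_abs,
        abs_of_pos hc0, not_lt]
      calc (2:ℝ) = c * (2/c) := by field_simp
        _ ≤ c * ‖x‖ := mul_le_mul_of_nonneg_left hx hc0.le
    simpa using notMem_support.mp hmem
  rw [h]; ring

lemma chi_mem (c : ℝ) (x : ℂ) : 0 ≤ 1 - b (c • x) ∧ 1 - b (c • x) ≤ 1 :=
  ⟨by linarith [b.le_one (x := c • x)], by linarith [b.nonneg (x := c • x)]⟩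

lemma chi_fderiv (c : ℝ) (x : ℂ) (v : ℂ) :
    fderiv ℝ (fun x : ℂ => 1 - b (c • x)) x v = -(c * fderiv ℝ (b : ℂ → ℝ) (c • x) v) := by
  have hL : HasFDerivAt (fun x : ℂ => c • x) (c • ContinuousLinearMap.id ℝ ℂ) x :=
    (hasFDerivAt_id x).const_smul c
  have hb : HasFDerivAt (b : ℂ → ℝ) (fderiv ℝ (b : ℂ → ℝ) (c • x)) (c • x) :=
    ((b.contDiff (n := (⊤:ℕ∞))).differentiable (by simp)).differentiableAt.hasFDerivAt
  have hcomp : HasFDerivAt (fun x : ℂ => b (c • x))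
      ((fderiv ℝ (b : ℂ → ℝ) (c • x)).comp (c • ContinuousLinearMap.id ℝ ℂ)) x :=
    hb.comp x hL
  have h : HasFDerivAt (fun x : ℂ => 1 - b (c • x))
      (0 - (fderiv ℝ (b : ℂ → ℝ) (c • x)).comp (c • ContinuousLinearMap.id ℝ ℂ)) x :=
    (hasFDerivAt_const (1:ℝ) x).sub hcomp
  rw [h.fderiv]
  simp only [zero_sub, ContinuousLinearMap.neg_apply, ContinuousLinearMap.comp_apply,
    ContinuousLinearMap.smul_apply, ContinuousLinearMap.id_apply]
  rw [(fderiv ℝ (b : ℂ → ℝ) (c • x)).map_smul]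
  simp [smul_eq_mul, mul_comm]

lemma chi_fderiv_zero (hOut : b.rOut = 2) (c : ℝ) (hc : 1 ≤ c) (x : ℂ) (hx : 2/c < ‖x‖) :
    fderiv ℝ (fun x : ℂ => 1 - b (c • x)) x = 0 := by
  have hopen : IsOpen {y : ℂ | 2/c < ‖y‖} := isOpen_lt continuous_const continuous_norm
  have hev : (fun x : ℂ => 1 - b (c • x)) =ᶠ[nhds x] fun _ => (1:ℝ) := by
    filter_upwards [hopen.mem_nhds hx] with y hy
    exact chi_one b hOut c hc y (le_of_lt hy)
  rw [hev.fderiv_eq, fderiv_fun_const]; rfl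
end cutoff

section prodrule
variable {f : ℂ × ℝ → ℝ} {χ : ℂ → ℝ}

lemma partial_fderiv (hf : ContDiff ℝ (⊤:ℕ∞) f) (t : ℝ) (x v : ℂ) :
    fderiv ℝ (fun y => f (y, t)) x v = fderiv ℝ f (x, t) (v, 0) := by
  have h1 : HasFDerivAt (fun y : ℂ => (y, t)) (ContinuousLinearMap.inl ℝ ℂ ℝ) x :=
    hasFDerivAt_prodMk_left x t
  have h2 := (hf.differentiable (by simp) (x, t)).hasFDerivAt
  have h3 : HasFDerivAt (fun y => f (y, t))
      ((fderiv ℝ f (x, t)).comp (ContinuousLinearMap.inl ℝ ℂ ℝ)) x := h2.comp x h1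
  rw [h3.fderiv]; rfl

lemma grad2_eq (hf : ContDiff ℝ (⊤:ℕ∞) f) (t : ℝ) (x : ℂ) :
    grad2 (fun y => f (y, t)) x = ⟨fderiv ℝ f (x, t) (1, 0), fderiv ℝ f (x, t) (Complex.I, 0)⟩ := by
  simp only [grad2, partial_fderiv hf]

lemma prod_fderiv_t (hf : ContDiff ℝ (⊤:ℕ∞) f) (hχ : ContDiff ℝ (⊤:ℕ∞) χ) (x : ℂ) (t : ℝ) :
    fderiv ℝ (fun p : ℂ × ℝ => f p * χ p.1) (x, t) (0, 1)
      = χ x * fderiv ℝ f (x, t) (0, 1) := by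
  have h1 := (hf.differentiable (by simp) (x, t)).hasFDerivAt
  have hχ' := (hχ.differentiable (by simp) x).hasFDerivAt
  have h2 : HasFDerivAt (fun p : ℂ × ℝ => χ p.1)
      ((fderiv ℝ χ x).comp (ContinuousLinearMap.fst ℝ ℂ ℝ)) (x, t) :=
    hχ'.comp (x, t) hasFDerivAt_fst
  have h3 : HasFDerivAt (fun p : ℂ × ℝ => f p * χ p.1) _ (x, t) := h1.mul h2
  rw [h3.fderiv]
  simp [mul_comm]

lemma prod_fderiv_x (hf : ContDiff ℝ (⊤:ℕ∞) f) (hχ : ContDiff ℝ (⊤:ℕ∞) χ) (x : ℂ) (t : ℝ)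
    (v : ℂ) :
    fderiv ℝ (fun y : ℂ => f (y, t) * χ y) x v
      = χ x * fderiv ℝ f (x, t) (v, 0) + f (x, t) * fderiv ℝ χ x v := by
  have h1 : HasFDerivAt (fun y => f (y, t))
      ((fderiv ℝ f (x, t)).comp (ContinuousLinearMap.inl ℝ ℂ ℝ)) x :=
    ((hf.differentiable (by simp) (x, t)).hasFDerivAt).comp x
      (hasFDerivAt_prodMk_left x t)
  have h2 := (hχ.differentiable (by simp) x).hasFDerivAt
  have h3 : HasFDerivAt (fun y : ℂ => f (y, t) * χ y) _ x := h1.mul h2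
  rw [h3.fderiv]
  simp only [ContinuousLinearMap.add_apply, ContinuousLinearMap.smul_apply,
    ContinuousLinearMap.comp_apply, ContinuousLinearMap.inl_apply, smul_eq_mul]
  ring

lemma grad2_prod (hf : ContDiff ℝ (⊤:ℕ∞) f) (hχ : ContDiff ℝ (⊤:ℕ∞) χ) (x : ℂ) (t : ℝ) :
    grad2 (fun y : ℂ => f (y, t) * χ y) x
      = ⟨χ x * fderiv ℝ f (x, t) (1, 0) + f (x, t) * fderiv ℝ χ x 1,
         χ x * fderiv ℝ f (x, t) (Complex.I, 0) + f (x, t) * fderiv ℝ χ x Complex.I⟩ := by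
  simp only [grad2, prod_fderiv_x hf hχ]

/-- The pointwise integrand identity after inserting the cutoff. -/
lemma integrand_id (hf : ContDiff ℝ (⊤:ℕ∞) f) (hχ : ContDiff ℝ (⊤:ℕ∞) χ)
    (wv : ℝ) (a : ℂ) (x : ℂ) (t : ℝ) :
    wv * fderiv ℝ (fun p : ℂ × ℝ => f p * χ p.1) (x, t) (0, 1)
      + wv * dotR a (grad2 (fun y => f (y, t) * χ y) x)
    = wv * (χ x * (fderiv ℝ f (x, t) (0, 1)
        + dotR a ⟨fderiv ℝ f (x, t) (1, 0), fderiv ℝ f (x, t) (Complex.I, 0)⟩))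
      + wv * (f (x, t) * dotR a (grad2 χ x)) := by
  rw [prod_fderiv_t hf hχ, grad2_prod hf hχ, grad2_def, dotR_expand, dotR_expand, dotR_expand]
  ring
end prodrule
end aux

set_option maxHeartbeats 2000000 in
/-- **Removal of the space-time singularity for the vorticity formulation.**
Let `μ > 1`, `A > 0`, `r = 1 + μ > 2`. Let `u` be measurable with
`|u(x,t)| ≤ A|x|^{1−1/μ}`, and `w` measurable with locally (in space) uniformly (in time)
bounded `L^r`-norms and `w(·,t) → w(·,0)` in `L^r(B(0,R))` as `t → 0⁺`. If the weak
vorticity equation holds on `(ℝ²∖{0}) × [s,∞)` for every `s > 0` (against spatially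
origin-avoiding test functions), then it holds on `ℝ² × [0,∞)` against every
`f ∈ C_c^∞(ℝ² × [0,∞))`. -/
theorem stmt19 (μ : ℝ) (hμ : 1 < μ) (A : ℝ) (hA : 0 < A)
    (u : ℂ → ℝ → ℂ)
    (humeas : Measurable fun p : ℂ × ℝ => u p.1 p.2)
    (hubd : ∀ x : ℂ, x ≠ 0 → ∀ t : ℝ, 0 ≤ t →
      ‖u x t‖ ≤ A * ‖x‖ ^ (1 - 1 / μ))
    (w : ℂ → ℝ → ℝ)
    (hwmeas : Measurable fun p : ℂ × ℝ => w p.1 p.2)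
    (hwbd : ∀ R : ℝ, 0 < R → ∃ M : ℝ≥0∞, M ≠ ⊤ ∧ ∀ t : ℝ, 0 ≤ t →
      eLpNorm (fun x => w x t) (ENNReal.ofReal (1 + μ))
        (volume.restrict (Metric.ball (0 : ℂ) R)) ≤ M)
    (hwconv : ∀ R : ℝ, 0 < R →
      Tendsto (fun t : ℝ =>
          eLpNorm (fun x => w x t - w x 0) (ENNReal.ofReal (1 + μ))
            (volume.restrict (Metric.ball (0 : ℂ) R)))
        (nhdsWithin 0 (Set.Ioi 0)) (nhds 0))
    (hweak : ∀ s : ℝ, 0 < s → ∀ F : ℂ × ℝ → ℝ, ContDiff ℝ (⊤ : ℕ∞) F →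
      HasCompactSupport F → tsupport F ⊆ {p : ℂ × ℝ | p.1 ≠ 0} →
      (∫ x : ℂ, w x s * F (x, s)) +
        (∫ t in Set.Ioi s, ∫ x : ℂ,
          w x t * fderiv ℝ F (x, t) (0, 1) +
            w x t * dotR (u x t) (grad2 (fun y => F (y, t)) x)) = 0) :
    ∀ f : ℂ × ℝ → ℝ, ContDiff ℝ (⊤ : ℕ∞) f → HasCompactSupport f →
      (∫ x : ℂ, w x 0 * f (x, 0)) +
        (∫ t in Set.Ioi (0 : ℝ), ∫ x : ℂ,
          w x t * fderiv ℝ f (x, t) (0, 1) +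
            w x t * dotR (u x t) (grad2 (fun y => f (y, t)) x)) = 0 := by
  intro f hf hsupp
  have hμ0 : (0:ℝ) < μ := lt_trans one_pos hμ
  have h1μ : (0:ℝ) < 1 + μ := by linarith
  have hexp0 : (0:ℝ) ≤ 1 - 1/μ := by
    have h : 1/μ ≤ 1 := by rw [div_le_one hμ0]; linarith
    linarith
  -- exponents
  set rr : ℝ≥0∞ := ENNReal.ofReal (1+μ) with hrrdef
  set qq : ℝ≥0∞ := ENNReal.ofReal ((1+μ)/μ) with hqqdef
  have hqpos : (0:ℝ) < (1+μ)/μ := by positivity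
  have hpq : 1/(1:ℝ≥0∞) = 1/rr + 1/qq := by
    rw [hrrdef, hqqdef, one_div, one_div, one_div, ← ENNReal.ofReal_inv_of_pos h1μ,
      ← ENNReal.ofReal_inv_of_pos hqpos, ← ENNReal.ofReal_add (by positivity) (by positivity)]
    rw [show (1+μ)⁻¹ + ((1+μ)/μ)⁻¹ = 1 by field_simp]
    simp
  have hq0 : qq ≠ 0 := by rw [hqqdef]; simpa using hqpos
  have hqt : qq ≠ ⊤ := by rw [hqqdef]; exact ENNReal.ofReal_ne_top
  have hqe : 1/qq.toReal = μ/(1+μ) := by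
    rw [hqqdef, ENNReal.toReal_ofReal hqpos.le]; field_simp
  have hrr1 : (1:ℝ≥0∞) ≤ rr := by
    rw [hrrdef]; exact ENNReal.one_le_ofReal.mpr (by linarith)
  -- the radius R
  obtain ⟨R0, hR0⟩ := hsupp.isBounded.subset_closedBall 0
  set R : ℝ := max R0 0 + 1 with hRdef
  have hR : 0 < R := by
    have := le_max_right R0 0; rw [hRdef]; linarith
  have hKR : ∀ p : ℂ × ℝ, p ∈ tsupport f → ‖p.1‖ < R ∧ |p.2| < R := by
    intro p hp
    have h1 := hR0 hp
    rw [Metric.mem_closedBall, dist_zero_right] at h1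
    have h2 : ‖p.1‖ ≤ ‖p‖ := norm_fst_le p
    have h3 : ‖p.2‖ ≤ ‖p‖ := norm_snd_le p
    rw [Real.norm_eq_abs] at h3
    have h4 := le_max_left R0 0
    constructor
    · rw [hRdef]; linarith
    · rw [hRdef]; linarith
  have hx_out : ∀ (x : ℂ) (t : ℝ), x ∉ Metric.ball (0:ℂ) R → (x,t) ∉ tsupport f := by
    intro x t hx hmem
    exact hx (Metric.mem_ball.mpr (by simpa [dist_zero_right] using (hKR _ hmem).1))
  have hf0 : ∀ p : ℂ × ℝ, p ∉ tsupport f → f p = 0 :=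
    fun p hp => image_eq_zero_of_notMem_tsupport hp
  have hdf0 : ∀ p : ℂ × ℝ, p ∉ tsupport f → fderiv ℝ f p = 0 := by
    intro p hp
    exact Function.notMem_support.mp fun hc => hp (support_fderiv_subset ℝ hc)
  -- the measure
  set ν : Measure ℂ := volume.restrict (Metric.ball (0:ℂ) R) with hνdef
  obtain ⟨M, hMt, hM⟩ := hwbd R hR
  set Mr : ℝ := M.toReal with hMrdef
  have hMr0 : 0 ≤ Mr := ENNReal.toReal_nonneg
  have hνle : ∀ ρ : ℝ, ν (Metric.ball (0:ℂ) ρ) ≤ volume (Metric.ball (0:ℂ) ρ) := by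
    intro ρ; rw [hνdef, Measure.restrict_apply' measurableSet_ball]
    exact measure_mono inter_subset_left
  have hae0 : ∀ᵐ x ∂ν, x ≠ 0 := by
    refine ae_restrict_of_ae ?_
    rw [ae_iff]
    simpa [Classical.not_not] using measure_singleton (0:ℂ)
  -- bounds on f and its derivative
  obtain ⟨Cf0, hCf0⟩ := hsupp.exists_bound_of_continuous hf.continuous
  set Cf : ℝ := max Cf0 0 with hCfdef
  have hCf : ∀ p, |f p| ≤ Cf :=
    fun p => le_trans (by simpa [Real.norm_eq_abs] using hCf0 p) (le_max_left _ _)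
  have hCfnn : 0 ≤ Cf := le_max_right _ _
  obtain ⟨Cd0, hCd0⟩ := (hsupp.fderiv (𝕜 := ℝ)).exists_bound_of_continuous
    (hf.continuous_fderiv (by simp))
  set Cd : ℝ := max Cd0 0 with hCddef
  have hCd : ∀ p, ‖fderiv ℝ f p‖ ≤ Cd := fun p => le_trans (hCd0 p) (le_max_left _ _)
  have hCdnn : 0 ≤ Cd := le_max_right _ _
  have hCdv : ∀ (p : ℂ × ℝ) (v : ℂ × ℝ), ‖v‖ ≤ 1 → |fderiv ℝ f p v| ≤ Cd := by
    intro p v hv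
    calc |fderiv ℝ f p v| = ‖fderiv ℝ f p v‖ := (Real.norm_eq_abs _).symm
      _ ≤ ‖fderiv ℝ f p‖ * ‖v‖ := (fderiv ℝ f p).le_opNorm v
      _ ≤ Cd * 1 := mul_le_mul (hCd p) hv (norm_nonneg v) hCdnn
      _ = Cd := mul_one Cd
  -- the bump function
  set b : ContDiffBump (0:ℂ) := ⟨1, 2, one_pos, one_lt_two⟩ with hbdef
  obtain ⟨Cb0, hCb0⟩ := (b.hasCompactSupport.fderiv (𝕜 := ℝ)).exists_bound_of_continuous
    ((b.contDiff (n := (⊤:ℕ∞))).continuous_fderiv (by simp))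
  set Cb : ℝ := max Cb0 0 with hCbdef
  have hCb : ∀ y : ℂ, ‖fderiv ℝ (b : ℂ → ℝ) y‖ ≤ Cb :=
    fun y => le_trans (hCb0 y) (le_max_left _ _)
  have hCbnn : 0 ≤ Cb := le_max_right _ _
  -- the cutoffs
  set χ : ℕ → ℂ → ℝ := fun k x => 1 - b (((k:ℝ)+1) • x) with hχdef
  have hck : ∀ k : ℕ, (1:ℝ) ≤ (k:ℝ)+1 := by
    intro k; have : (0:ℝ) ≤ (k:ℝ) := Nat.cast_nonneg k; linarith
  have hckpos : ∀ k : ℕ, (0:ℝ) < (k:ℝ)+1 := fun k => lt_of_lt_of_le one_pos (hck k)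
  have hsk : ∀ k : ℕ, (0:ℝ) < ((k:ℝ)+1)⁻¹ := fun k => by positivity
  have hχs : ∀ k : ℕ, ContDiff ℝ (⊤:ℕ∞) (χ k) := by
    intro k; rw [hχdef]; exact chi_smooth b _
  have hχ01 : ∀ (k : ℕ) (x : ℂ), 0 ≤ χ k x ∧ χ k x ≤ 1 := by
    intro k x; rw [hχdef]; exact chi_mem b _ x
  have hχzero : ∀ (k : ℕ) (x:ℂ), ‖x‖ ≤ ((k:ℝ)+1)⁻¹ → χ k x = 0 := by
    intro k x hx; rw [hχdef]
    exact chi_zero b rfl _ (hck k) x (by rwa [one_div])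
  have hχone : ∀ (k : ℕ) (x:ℂ), 2*((k:ℝ)+1)⁻¹ ≤ ‖x‖ → χ k x = 1 := by
    intro k x hx; rw [hχdef]
    exact chi_one b rfl _ (hck k) x (by rw [div_eq_mul_inv]; exact hx)
  have hχd0 : ∀ (k : ℕ) (x:ℂ), 2*((k:ℝ)+1)⁻¹ < ‖x‖ → fderiv ℝ (χ k) x = 0 := by
    intro k x hx; rw [hχdef]
    exact chi_fderiv_zero b rfl _ (hck k) x (by rw [div_eq_mul_inv]; exact hx)
  have hχdbd : ∀ (k : ℕ) (x v : ℂ), ‖v‖ ≤ 1 → |fderiv ℝ (χ k) x v| ≤ ((k:ℝ)+1) * Cb := by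
    intro k x v hv
    have h1 : fderiv ℝ (χ k) x v = -(((k:ℝ)+1) * fderiv ℝ (b : ℂ → ℝ) (((k:ℝ)+1) • x) v) := by
      rw [hχdef]; exact chi_fderiv b _ x v
    rw [h1, abs_neg, abs_mul, abs_of_pos (hckpos k)]
    refine mul_le_mul_of_nonneg_left ?_ (hckpos k).le
    calc |fderiv ℝ (b : ℂ → ℝ) (((k:ℝ)+1) • x) v|
        = ‖fderiv ℝ (b : ℂ → ℝ) (((k:ℝ)+1) • x) v‖ := (Real.norm_eq_abs _).symm
      _ ≤ ‖fderiv ℝ (b : ℂ → ℝ) (((k:ℝ)+1) • x)‖ * ‖v‖ := ContinuousLinearMap.le_opNorm _ v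
      _ ≤ Cb * 1 := mul_le_mul (hCb _) hv (norm_nonneg v) hCbnn
      _ = Cb := mul_one Cb
  have hχlim : ∀ x : ℂ, x ≠ 0 → Tendsto (fun k => χ k x) atTop (nhds 1) := by
    intro x hx0
    have h2 : Tendsto (fun k : ℕ => 2*((k:ℝ)+1)⁻¹) atTop (nhds 0) := by
      have := ((tendsto_one_div_add_atTop_nhds_zero_nat (𝕜 := ℝ)).congr
        (fun k => by rw [one_div])).const_mul 2
      simpa using this
    have hev : ∀ᶠ k : ℕ in atTop, χ k x = 1 := by
      filter_upwards [h2.eventually_lt_const (norm_pos_iff.mpr hx0)] with k hk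
      exact hχone k x hk.le
    exact Tendsto.congr' (by filter_upwards [hev] with k hk; rw [hk]) tendsto_const_nhds
  -- the spatial integrands
  set G : ℝ → ℂ → ℝ := fun t x => fderiv ℝ f (x,t) (0,1)
      + dotR (u x t) ⟨fderiv ℝ f (x,t) (1,0), fderiv ℝ f (x,t) (Complex.I,0)⟩ with hGdef
  set G3 : ℕ → ℝ → ℂ → ℝ := fun k t x => f (x,t) * dotR (u x t) (grad2 (χ k) x) with hG3def
  set CG : ℝ := Cd + A * R^(1-1/μ) * (2*Cd) with hCGdef
  have hARnn : (0:ℝ) ≤ A * R^(1-1/μ) := mul_nonneg hA.le (Real.rpow_nonneg hR.le _)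
  have hCGnn : 0 ≤ CG := by
    rw [hCGdef]
    have : (0:ℝ) ≤ A * R^(1-1/μ) * (2*Cd) := mul_nonneg hARnn (by linarith)
    linarith
  have hGzero : ∀ (t:ℝ) (x:ℂ), (x,t) ∉ tsupport f → G t x = 0 := by
    intro t x hx
    rw [hGdef]
    simp only
    rw [hdf0 _ hx, dotR_expand]
    simp
  have hGzero' : ∀ (t:ℝ) (x:ℂ), x ∉ Metric.ball (0:ℂ) R → G t x = 0 :=
    fun t x hx => hGzero t x (hx_out x t hx)
  have hGbd : ∀ (t:ℝ), 0 ≤ t → ∀ (x:ℂ), x ≠ 0 → |G t x| ≤ CG := by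
    intro t ht x hx0
    by_cases hmem : (x,t) ∈ tsupport f
    · have h1 : |fderiv ℝ f (x,t) (0,1)| ≤ Cd :=
        hCdv _ _ (le_of_eq (by simp [Prod.norm_def]))
      have hu : ‖u x t‖ ≤ A * R^(1-1/μ) := by
        refine (hubd x hx0 t ht).trans ?_
        exact mul_le_mul_of_nonneg_left
          (Real.rpow_le_rpow (norm_nonneg x) (hKR _ hmem).1.le hexp0) hA.le
      have hre : |(u x t).re| ≤ A * R^(1-1/μ) := le_trans (Complex.abs_re_le_norm _) hu
      have him : |(u x t).im| ≤ A * R^(1-1/μ) := le_trans (Complex.abs_im_le_norm _) hu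
      have ha1 : |fderiv ℝ f (x,t) (1,0)| ≤ Cd :=
        hCdv _ _ (le_of_eq (by simp [Prod.norm_def]))
      have ha2 : |fderiv ℝ f (x,t) (Complex.I,0)| ≤ Cd :=
        hCdv _ _ (le_of_eq (by simp [Prod.norm_def]))
      have h2 : |dotR (u x t) ⟨fderiv ℝ f (x,t) (1,0), fderiv ℝ f (x,t) (Complex.I,0)⟩|
          ≤ A * R^(1-1/μ) * (2*Cd) := by
        rw [dotR_expand]
        calc |(u x t).re * fderiv ℝ f (x,t) (1,0) + (u x t).im * fderiv ℝ f (x,t) (Complex.I,0)|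
            ≤ |(u x t).re * fderiv ℝ f (x,t) (1,0)|
              + |(u x t).im * fderiv ℝ f (x,t) (Complex.I,0)| := abs_add_le _ _
          _ = |(u x t).re| * |fderiv ℝ f (x,t) (1,0)|
              + |(u x t).im| * |fderiv ℝ f (x,t) (Complex.I,0)| := by rw [abs_mul, abs_mul]
          _ ≤ (A * R^(1-1/μ)) * Cd + (A * R^(1-1/μ)) * Cd := add_le_add
              (mul_le_mul hre ha1 (abs_nonneg _) hARnn)
              (mul_le_mul him ha2 (abs_nonneg _) hARnn)
          _ = A * R^(1-1/μ) * (2*Cd) := by ring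
      calc |G t x| ≤ |fderiv ℝ f (x,t) (0,1)|
            + |dotR (u x t) ⟨fderiv ℝ f (x,t) (1,0), fderiv ℝ f (x,t) (Complex.I,0)⟩| := by
            rw [hGdef]; exact abs_add_le _ _
        _ ≤ Cd + A * R^(1-1/μ) * (2*Cd) := add_le_add h1 h2
        _ = CG := by rw [hCGdef]
    · rw [hGzero t x hmem]; simpa using hCGnn
  -- term-3 integrand facts
  set C3 : ℕ → ℝ := fun k => Cf * (A * (3*((k:ℝ)+1)⁻¹)^(1-1/μ)) * (2*(((k:ℝ)+1)*Cb)) with hC3def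
  have hC3nn : ∀ k : ℕ, 0 ≤ C3 k := by
    intro k
    rw [hC3def]
    have h1 : (0:ℝ) ≤ (3*((k:ℝ)+1)⁻¹)^(1-1/μ) := Real.rpow_nonneg (by positivity) _
    have h2 : (0:ℝ) ≤ ((k:ℝ)+1)*Cb := mul_nonneg (hckpos k).le hCbnn
    have h3 : (0:ℝ) ≤ A * (3*((k:ℝ)+1)⁻¹)^(1-1/μ) := mul_nonneg hA.le h1
    have := mul_nonneg (mul_nonneg hCfnn h3) (by linarith : (0:ℝ) ≤ 2*(((k:ℝ)+1)*Cb))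
    exact this
  have hG3zero : ∀ (k : ℕ) (t:ℝ) (x:ℂ), x ∉ Metric.ball (0:ℂ) (3*((k:ℝ)+1)⁻¹) → G3 k t x = 0 := by
    intro k t x hx
    rw [Metric.mem_ball, dist_zero_right, not_lt] at hx
    have hxn : 2*((k:ℝ)+1)⁻¹ < ‖x‖ := by
      have h1 : (0:ℝ) < ((k:ℝ)+1)⁻¹ := hsk k
      linarith
    rw [hG3def]
    simp only
    rw [grad2_def, hχd0 k x hxn]
    simp [dotR_expand]
  have hG3bd : ∀ (k : ℕ) (t:ℝ), 0 ≤ t → ∀ (x:ℂ), x ≠ 0 → |G3 k t x| ≤ C3 k := by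
    intro k t ht x hx0
    by_cases hmem : x ∈ Metric.ball (0:ℂ) (3*((k:ℝ)+1)⁻¹)
    · rw [Metric.mem_ball, dist_zero_right] at hmem
      have hu : ‖u x t‖ ≤ A * (3*((k:ℝ)+1)⁻¹)^(1-1/μ) :=
        (hubd x hx0 t ht).trans (mul_le_mul_of_nonneg_left
          (Real.rpow_le_rpow (norm_nonneg x) hmem.le hexp0) hA.le)
      have hre : |(u x t).re| ≤ A * (3*((k:ℝ)+1)⁻¹)^(1-1/μ) :=
        le_trans (Complex.abs_re_le_norm _) hu
      have him : |(u x t).im| ≤ A * (3*((k:ℝ)+1)⁻¹)^(1-1/μ) :=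
        le_trans (Complex.abs_im_le_norm _) hu
      have hAnn : (0:ℝ) ≤ A * (3*((k:ℝ)+1)⁻¹)^(1-1/μ) :=
        mul_nonneg hA.le (Real.rpow_nonneg (by positivity) _)
      have h1 : |fderiv ℝ (χ k) x 1| ≤ ((k:ℝ)+1)*Cb := hχdbd k x 1 (by simp)
      have h2 : |fderiv ℝ (χ k) x Complex.I| ≤ ((k:ℝ)+1)*Cb := hχdbd k x Complex.I (by simp)
      have hd : |dotR (u x t) (grad2 (χ k) x)|
          ≤ (A * (3*((k:ℝ)+1)⁻¹)^(1-1/μ)) * (2*(((k:ℝ)+1)*Cb)) := by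
        rw [grad2_def, dotR_expand]
        calc |(u x t).re * fderiv ℝ (χ k) x 1 + (u x t).im * fderiv ℝ (χ k) x Complex.I|
            ≤ |(u x t).re| * |fderiv ℝ (χ k) x 1|
              + |(u x t).im| * |fderiv ℝ (χ k) x Complex.I| := by
              refine (abs_add_le _ _).trans ?_
              rw [abs_mul, abs_mul]
          _ ≤ (A * (3*((k:ℝ)+1)⁻¹)^(1-1/μ)) * (((k:ℝ)+1)*Cb)
              + (A * (3*((k:ℝ)+1)⁻¹)^(1-1/μ)) * (((k:ℝ)+1)*Cb) := add_le_add
              (mul_le_mul hre h1 (abs_nonneg _) hAnn)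
              (mul_le_mul him h2 (abs_nonneg _) hAnn)
          _ = (A * (3*((k:ℝ)+1)⁻¹)^(1-1/μ)) * (2*(((k:ℝ)+1)*Cb)) := by ring
      calc |G3 k t x| = |f (x,t)| * |dotR (u x t) (grad2 (χ k) x)| := by
            rw [hG3def]; exact abs_mul _ _
        _ ≤ Cf * ((A * (3*((k:ℝ)+1)⁻¹)^(1-1/μ)) * (2*(((k:ℝ)+1)*Cb))) :=
            mul_le_mul (hCf _) hd (abs_nonneg _) hCfnn
        _ = C3 k := by rw [hC3def]; ring
    · rw [hG3zero k t x hmem]; simpa using hC3nn k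
  -- measurability
  have hwslice : ∀ t : ℝ, Measurable fun x => w x t := fun t =>
    hwmeas.comp (measurable_id.prodMk measurable_const)
  have hdfcont : Continuous (fun p : ℂ × ℝ => fderiv ℝ f p) :=
    hf.continuous_fderiv (by simp)
  have hujoint : Measurable fun q : ℝ × ℂ => u q.2 q.1 := humeas.comp measurable_swap
  have hwjoint : Measurable fun q : ℝ × ℂ => w q.2 q.1 := hwmeas.comp measurable_swap
  have hdfjoint : ∀ v : ℂ × ℝ, Measurable fun q : ℝ × ℂ => fderiv ℝ f (q.2, q.1) v := by
    intro v
    exact ((hdfcont.clm_apply continuous_const).comp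
      (continuous_snd.prodMk continuous_fst)).measurable
  have hGjoint : Measurable fun q : ℝ × ℂ => G q.1 q.2 := by
    rw [hGdef]
    simp only [dotR_expand]
    exact (hdfjoint _).add
      (((Complex.measurable_re.comp hujoint).mul (hdfjoint _)).add
        ((Complex.measurable_im.comp hujoint).mul (hdfjoint _)))
  have hGslice : ∀ t : ℝ, Measurable (G t) := fun t =>
    hGjoint.comp (measurable_const.prodMk measurable_id)
  have hχdcont : ∀ k, Continuous fun x : ℂ => fderiv ℝ (χ k) x :=
    fun k => (hχs k).continuous_fderiv (by simp)
  have hG3joint : ∀ k, Measurable fun q : ℝ × ℂ => G3 k q.1 q.2 := by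
    intro k
    rw [hG3def]
    simp only [grad2_def, dotR_expand]
    refine Measurable.mul ?_ ?_
    · exact (hf.continuous.comp (continuous_snd.prodMk continuous_fst)).measurable
    · exact ((Complex.measurable_re.comp hujoint).mul
        ((((hχdcont k).clm_apply continuous_const).comp continuous_snd).measurable)).add
        ((Complex.measurable_im.comp hujoint).mul
          ((((hχdcont k).clm_apply continuous_const).comp continuous_snd).measurable))
  have hG3slice : ∀ k (t : ℝ), Measurable (G3 k t) := fun k t =>
    (hG3joint k).comp (measurable_const.prodMk measurable_id)
  -- the master Hölder bound specialized to w
  have keyW : ∀ (t : ℝ), 0 ≤ t → ∀ (Gg : ℂ → ℝ) (C ρ : ℝ), 0 ≤ C → Measurable Gg →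
      (∀ᵐ x ∂ν, |Gg x| ≤ C) → (∀ x, x ∉ Metric.ball (0:ℂ) ρ → Gg x = 0) →
      Integrable (fun x => w x t * Gg x) ν ∧
        |∫ x, w x t * Gg x ∂ν| ≤
          Mr * (C * ((volume (Metric.ball (0:ℂ) ρ)).toReal) ^ (1/qq.toReal)) :=
    fun t ht Gg C ρ hC hGm hGb hGs =>
      holder_key hpq hq0 hqt _ _ (hwslice t).aestronglyMeasurable hGm.aestronglyMeasurable
        M (hM t ht) hMt C hC ρ hGb hGs (hνle ρ)
  have hwInt : ∀ t : ℝ, 0 ≤ t → Integrable (fun x => w x t) ν := by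
    intro t ht
    have h := (keyW t ht (fun x => (Metric.ball (0:ℂ) R).indicator (fun _ => (1:ℝ)) x) 1 R
      one_pos.le (measurable_one.indicator measurableSet_ball)
      (Eventually.of_forall fun x => by
        by_cases h : x ∈ Metric.ball (0:ℂ) R <;> simp [h])
      (fun x hx => by simp [hx])).1
    refine h.congr ?_
    filter_upwards [ae_restrict_mem measurableSet_ball] with x hx
    simp [hx]
  -- facts about f·χ
  have hfχmeas : ∀ (k : ℕ) (t:ℝ), Measurable fun x : ℂ => f (x,t) * χ k x :=
    fun k t => ((hf.continuous.comp (continuous_id.prodMk continuous_const)).mul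
      (hχs k).continuous).measurable
  have hfχbd : ∀ (k : ℕ) (t:ℝ) (x:ℂ), |f (x,t) * χ k x| ≤ Cf := by
    intro k t x
    rw [abs_mul]
    calc |f (x,t)| * |χ k x| ≤ Cf * 1 := by
          refine mul_le_mul (hCf _) ?_ (abs_nonneg _) hCfnn
          rw [abs_of_nonneg (hχ01 k x).1]; exact (hχ01 k x).2
      _ = Cf := mul_one Cf
  have hfχzero : ∀ (k : ℕ) (t:ℝ) (x:ℂ), x ∉ Metric.ball (0:ℂ) R → f (x,t) * χ k x = 0 :=
    fun k t x hx => by rw [hf0 _ (hx_out x t hx)]; ring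
  -- rewrite goal to the G form
  have hgoal2 : (∫ t in Set.Ioi (0:ℝ), ∫ x : ℂ,
      w x t * fderiv ℝ f (x, t) (0, 1) + w x t * dotR (u x t) (grad2 (fun y => f (y, t)) x))
      = ∫ t in Set.Ioi (0:ℝ), ∫ x : ℂ, w x t * G t x := by
    congr 1
    funext t
    congr 1
    funext x
    rw [grad2_eq hf, hGdef]
    simp only
    ring
  rw [hgoal2]
  -- convert spatial integrals to the restricted measure
  have hiconv : ∀ (g : ℂ → ℝ), (∀ x, x ∉ Metric.ball (0:ℂ) R → g x = 0) →
      (∫ x : ℂ, g x) = ∫ x, g x ∂ν := fun g hg =>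
    (setIntegral_eq_integral_of_forall_compl_eq_zero hg).symm
  rw [show (∫ x : ℂ, w x 0 * f (x,0)) = ∫ x, w x 0 * f (x,0) ∂ν from
    hiconv _ (fun x hx => by rw [hf0 _ (hx_out x 0 hx)]; ring)]
  have hinner : ∀ t : ℝ, (∫ x : ℂ, w x t * G t x) = ∫ x, w x t * G t x ∂ν := fun t =>
    hiconv _ (fun x hx => by rw [hGzero' t x hx]; ring)
  simp only [hinner]
  -- the weak formulation applied to f·χₖ, in restricted form
  have hFk : ∀ k : ℕ,
      (∫ x, w x (((k:ℝ)+1)⁻¹) * (f (x, ((k:ℝ)+1)⁻¹) * χ k x) ∂ν) +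
        (∫ t in Set.Ioi (((k:ℝ)+1)⁻¹), ∫ x,
          w x t * (χ k x * G t x) + w x t * G3 k t x ∂ν) = 0 := by
    intro k
    have hsm : ContDiff ℝ (⊤:ℕ∞) (fun p : ℂ × ℝ => f p * χ k p.1) :=
      hf.mul ((hχs k).comp contDiff_fst)
    have hcs : HasCompactSupport (fun p : ℂ × ℝ => f p * χ k p.1) := hsupp.mul_right
    have hts : tsupport (fun p : ℂ × ℝ => f p * χ k p.1) ⊆ {p : ℂ × ℝ | p.1 ≠ 0} := by
      have hsub : Function.support (fun p : ℂ × ℝ => f p * χ k p.1)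
          ⊆ {p : ℂ × ℝ | ((k:ℝ)+1)⁻¹ ≤ ‖p.1‖} := by
        intro p hp
        by_contra hcon
        simp only [mem_setOf_eq, not_le] at hcon
        have h0 : χ k p.1 = 0 := hχzero k p.1 hcon.le
        exact hp (by simp [h0])
      have hclosed : IsClosed {p : ℂ × ℝ | ((k:ℝ)+1)⁻¹ ≤ ‖p.1‖} :=
        isClosed_le continuous_const (continuous_norm.comp continuous_fst)
      refine (closure_minimal hsub hclosed).trans ?_
      intro p hp
      simp only [mem_setOf_eq] at hp ⊢
      intro h0
      rw [h0, norm_zero] at hp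
      exact absurd hp (not_le.mpr (hsk k))
    have h0 := hweak (((k:ℝ)+1)⁻¹) (hsk k) _ hsm hcs hts
    have hrw : (fun t : ℝ => (∫ x : ℂ,
        w x t * fderiv ℝ (fun p : ℂ × ℝ => f p * χ k p.1) (x, t) (0, 1) +
          w x t * dotR (u x t) (grad2 (fun y => (fun p : ℂ × ℝ => f p * χ k p.1) (y, t)) x)))
        = fun t : ℝ => ∫ x, w x t * (χ k x * G t x) + w x t * G3 k t x ∂ν := by
      funext t
      have heq : (fun x : ℂ =>
          w x t * fderiv ℝ (fun p : ℂ × ℝ => f p * χ k p.1) (x, t) (0, 1) +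
            w x t * dotR (u x t) (grad2 (fun y => (fun p : ℂ × ℝ => f p * χ k p.1) (y, t)) x))
          = fun x : ℂ => w x t * (χ k x * G t x) + w x t * G3 k t x := by
        funext x
        have hid := integrand_id hf (hχs k) (w x t) (u x t) x t
        rw [hGdef, hG3def]
        simp only
        exact hid
      rw [heq]
      refine hiconv _ (fun x hx => ?_)
      have hG3z : G3 k t x = 0 := by
        rw [hG3def]; simp only; rw [hf0 _ (hx_out x t hx)]; ring
      rw [hGzero' t x hx, hG3z]; ring
    have hsp : (∫ x, w x (((k:ℝ)+1)⁻¹) * (f (x, ((k:ℝ)+1)⁻¹) * χ k x) ∂ν)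
        = ∫ x : ℂ, w x (((k:ℝ)+1)⁻¹) * (f (x, ((k:ℝ)+1)⁻¹) * χ k x) :=
      (hiconv _ (fun x hx => by rw [hf0 _ (hx_out x _ hx)]; ring)).symm
    rw [hsp, ← hrw]
    exact h0
  -- spatial limit
  have hNkt : ∀ k : ℕ, eLpNorm (fun x => w x (((k:ℝ)+1)⁻¹) - w x 0) rr ν ≠ ⊤ := by
    intro k
    have hNk : eLpNorm (fun x => w x (((k:ℝ)+1)⁻¹) - w x 0) rr ν ≤ M + M := by
      refine (eLpNorm_sub_le (hwslice _).aestronglyMeasurable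
        (hwslice 0).aestronglyMeasurable hrr1).trans ?_
      exact add_le_add (hM _ (hsk k).le) (hM 0 le_rfl)
    exact ne_top_of_le_ne_top (ENNReal.add_ne_top.mpr ⟨hMt, hMt⟩) hNk
  have hdiffk : ∀ k : ℕ, Integrable
      (fun x => (w x (((k:ℝ)+1)⁻¹) - w x 0) * (f (x, ((k:ℝ)+1)⁻¹) * χ k x)) ν ∧
      |∫ x, (w x (((k:ℝ)+1)⁻¹) - w x 0) * (f (x, ((k:ℝ)+1)⁻¹) * χ k x) ∂ν| ≤
        (eLpNorm (fun x => w x (((k:ℝ)+1)⁻¹) - w x 0) rr ν).toReal *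
          (Cf * ((volume (Metric.ball (0:ℂ) R)).toReal) ^ (1/qq.toReal)) := by
    intro k
    exact holder_key hpq hq0 hqt _ _ ((hwslice _).sub (hwslice 0)).aestronglyMeasurable
      (hfχmeas k _).aestronglyMeasurable _ le_rfl (hNkt k) Cf hCfnn R
      (Eventually.of_forall fun x => hfχbd k _ x) (hfχzero k _) (hνle R)
  have hI0k : ∀ k : ℕ, Integrable (fun x => w x 0 * (f (x, ((k:ℝ)+1)⁻¹) * χ k x)) ν :=
    fun k => (keyW 0 le_rfl _ Cf R hCfnn (hfχmeas k _)
      (Eventually.of_forall fun x => hfχbd k _ x) (hfχzero k _)).1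
  have hsksplit : ∀ k : ℕ, (∫ x, w x (((k:ℝ)+1)⁻¹) * (f (x, ((k:ℝ)+1)⁻¹) * χ k x) ∂ν)
      = (∫ x, (w x (((k:ℝ)+1)⁻¹) - w x 0) * (f (x, ((k:ℝ)+1)⁻¹) * χ k x) ∂ν)
        + ∫ x, w x 0 * (f (x, ((k:ℝ)+1)⁻¹) * χ k x) ∂ν := by
    intro k
    rw [← integral_add (hdiffk k).1 (hI0k k)]
    congr 1; funext x; ring
  have hskO : Tendsto (fun k : ℕ => ((k:ℝ)+1)⁻¹) atTop (nhdsWithin 0 (Set.Ioi 0)) := by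
    rw [tendsto_nhdsWithin_iff]
    exact ⟨tendsto_one_div_add_atTop_nhds_zero_nat.congr (fun k => by rw [one_div]),
      Eventually.of_forall fun k => mem_Ioi.mpr (hsk k)⟩
  have hpart1 : Tendsto (fun k : ℕ =>
      ∫ x, (w x (((k:ℝ)+1)⁻¹) - w x 0) * (f (x, ((k:ℝ)+1)⁻¹) * χ k x) ∂ν)
      atTop (nhds 0) := by
    refine squeeze_zero_norm (a := fun k : ℕ =>
        (eLpNorm (fun x => w x (((k:ℝ)+1)⁻¹) - w x 0) rr ν).toReal *
          (Cf * ((volume (Metric.ball (0:ℂ) R)).toReal) ^ (1/qq.toReal)))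
      (fun k => by rw [Real.norm_eq_abs]; exact (hdiffk k).2) ?_
    have h2 := (hwconv R hR).comp hskO
    have h3 : Tendsto (fun k : ℕ =>
        (eLpNorm (fun x => w x (((k:ℝ)+1)⁻¹) - w x 0) rr ν).toReal) atTop (nhds 0) := by
      have h4 := (ENNReal.tendsto_toReal (a := 0) (by simp)).comp h2
      exact h4
    have h5 := h3.mul_const (Cf * ((volume (Metric.ball (0:ℂ) R)).toReal) ^ (1/qq.toReal))
    simpa using h5
  have hpart2 : Tendsto (fun k : ℕ => ∫ x, w x 0 * (f (x, ((k:ℝ)+1)⁻¹) * χ k x) ∂ν)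
      atTop (nhds (∫ x, w x 0 * f (x,0) ∂ν)) := by
    refine tendsto_integral_of_dominated_convergence (fun x => |w x 0| * Cf)
      (fun k => ((hwslice 0).mul (hfχmeas k _)).aestronglyMeasurable)
      ((hwInt 0 le_rfl).abs.mul_const Cf) (fun k => Eventually.of_forall fun x => ?_) ?_
    · rw [Real.norm_eq_abs, abs_mul]
      exact mul_le_mul_of_nonneg_left (hfχbd k _ x) (abs_nonneg _)
    · filter_upwards [hae0] with x hx0
      have hflim : Tendsto (fun k : ℕ => f (x, ((k:ℝ)+1)⁻¹)) atTop (nhds (f (x,0))) := by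
        have hp : Tendsto (fun k : ℕ => ((x : ℂ), ((k:ℝ)+1)⁻¹)) atTop (nhds (x, 0)) :=
          tendsto_const_nhds.prodMk_nhds
            (tendsto_one_div_add_atTop_nhds_zero_nat.congr (fun k => by rw [one_div]))
        exact (hf.continuous.tendsto _).comp hp
      have h6 := (hflim.mul (hχlim x hx0)).const_mul (w x 0)
      simpa using h6
  have hT_sp : Tendsto (fun k : ℕ =>
      ∫ x, w x (((k:ℝ)+1)⁻¹) * (f (x, ((k:ℝ)+1)⁻¹) * χ k x) ∂ν)
      atTop (nhds (∫ x, w x 0 * f (x,0) ∂ν)) := by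
    simp only [hsksplit]
    have h7 := hpart1.add hpart2
    simpa using h7
  -- term-3 bound tends to zero
  have hbk : Tendsto (fun k : ℕ => Mr * (C3 k *
      ((volume (Metric.ball (0:ℂ) (3*((k:ℝ)+1)⁻¹))).toReal ^ (1/qq.toReal)))) atTop (nhds 0) := by
    simp only [hqe, hC3def]
    exact tendsto_bk μ hμ Cf A Cb Mr
  obtain ⟨B, hB⟩ := hbk.bddAbove_range
  have hBk : ∀ k : ℕ, Mr * (C3 k *
      ((volume (Metric.ball (0:ℂ) (3*((k:ℝ)+1)⁻¹))).toReal ^ (1/qq.toReal))) ≤ B :=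
    fun k => hB (Set.mem_range_self k)
  have hB0 : 0 ≤ B := le_trans (mul_nonneg hMr0 (mul_nonneg (hC3nn 0)
    (Real.rpow_nonneg ENNReal.toReal_nonneg _))) (hBk 0)
  have hMCG0 : 0 ≤ Mr * (CG * ((volume (Metric.ball (0:ℂ) R)).toReal ^ (1/qq.toReal))) :=
    mul_nonneg hMr0 (mul_nonneg hCGnn (Real.rpow_nonneg ENNReal.toReal_nonneg _))
  set CD : ℝ := Mr * (CG * ((volume (Metric.ball (0:ℂ) R)).toReal ^ (1/qq.toReal))) + B
    with hCDdef
  have hCD0 : 0 ≤ CD := by rw [hCDdef]; linarith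
  -- inner integral bounds
  have hIχG : ∀ (k : ℕ) (t:ℝ), 0 ≤ t → Integrable (fun x => w x t * (χ k x * G t x)) ν ∧
      |∫ x, w x t * (χ k x * G t x) ∂ν| ≤
        Mr * (CG * ((volume (Metric.ball (0:ℂ) R)).toReal ^ (1/qq.toReal))) := by
    intro k t ht
    refine keyW t ht _ CG R hCGnn (((hχs k).continuous.measurable).mul (hGslice t)) ?_ ?_
    · filter_upwards [hae0] with x hx0
      rw [abs_mul]
      calc |χ k x| * |G t x| ≤ 1 * CG := by
            refine mul_le_mul ?_ (hGbd t ht x hx0) (abs_nonneg _) one_pos.le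
            rw [abs_of_nonneg (hχ01 k x).1]; exact (hχ01 k x).2
        _ = CG := one_mul CG
    · intro x hx; rw [hGzero' t x hx]; ring
  have hIG3 : ∀ (k : ℕ) (t:ℝ), 0 ≤ t → Integrable (fun x => w x t * G3 k t x) ν ∧
      |∫ x, w x t * G3 k t x ∂ν| ≤ Mr * (C3 k *
        ((volume (Metric.ball (0:ℂ) (3*((k:ℝ)+1)⁻¹))).toReal ^ (1/qq.toReal))) := by
    intro k t ht
    refine keyW t ht _ (C3 k) (3*((k:ℝ)+1)⁻¹) (hC3nn k) (hG3slice k t) ?_ (hG3zero k t)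
    filter_upwards [hae0] with x hx0
    exact hG3bd k t ht x hx0
  have hIP : ∀ (t:ℝ), 0 ≤ t → Integrable (fun x => w x t * G t x) ν ∧
      |∫ x, w x t * G t x ∂ν| ≤
        Mr * (CG * ((volume (Metric.ball (0:ℂ) R)).toReal ^ (1/qq.toReal))) := by
    intro t ht
    refine keyW t ht _ CG R hCGnn (hGslice t) ?_ (hGzero' t)
    filter_upwards [hae0] with x hx0
    exact hGbd t ht x hx0
  -- the time functions
  have hksplit : ∀ (k : ℕ) (t : ℝ), 0 ≤ t → (∫ x, w x t * (χ k x * G t x) + w x t * G3 k t x ∂ν) =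
      (∫ x, w x t * (χ k x * G t x) ∂ν) + ∫ x, w x t * G3 k t x ∂ν :=
    fun k t ht => integral_add (hIχG k t ht).1 (hIG3 k t ht).1
  have hkbd : ∀ (k : ℕ) (t : ℝ), 0 ≤ t → |∫ x, w x t * (χ k x * G t x) + w x t * G3 k t x ∂ν| ≤ CD := by
    intro k t ht
    rw [hksplit k t ht, hCDdef]
    calc |(∫ x, w x t * (χ k x * G t x) ∂ν) + ∫ x, w x t * G3 k t x ∂ν|
        ≤ |∫ x, w x t * (χ k x * G t x) ∂ν| + |∫ x, w x t * G3 k t x ∂ν| := abs_add_le _ _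
      _ ≤ Mr * (CG * ((volume (Metric.ball (0:ℂ) R)).toReal ^ (1/qq.toReal)))
          + Mr * (C3 k * ((volume (Metric.ball (0:ℂ) (3*((k:ℝ)+1)⁻¹))).toReal ^ (1/qq.toReal))) :=
          add_le_add (hIχG k t ht).2 (hIG3 k t ht).2
      _ ≤ Mr * (CG * ((volume (Metric.ball (0:ℂ) R)).toReal ^ (1/qq.toReal))) + B :=
          add_le_add le_rfl (hBk k)
  have hxtout : ∀ (t : ℝ), R ≤ t → ∀ x : ℂ, (x,t) ∉ tsupport f := by
    intro t hRt x hmem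
    have h8 := (hKR _ hmem).2
    have habs : t ≤ |t| := le_abs_self t
    linarith
  have hkzero : ∀ (k : ℕ) (t : ℝ), R ≤ t → (∫ x, w x t * (χ k x * G t x) + w x t * G3 k t x ∂ν) = 0 := by
    intro k t hRt
    rw [show (fun x => w x t * (χ k x * G t x) + w x t * G3 k t x) = fun _ : ℂ => (0:ℝ) from
      funext fun x => ?_]
    · simp
    · have h1 : G t x = 0 := hGzero t x (hxtout t hRt x)
      have h2 : G3 k t x = 0 := by
        rw [hG3def]; simp only; rw [hf0 _ (hxtout t hRt x)]; ring
      rw [h1, h2]; ring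
  have hhzero : ∀ t : ℝ, R ≤ t → (∫ x, w x t * G t x ∂ν) = 0 := by
    intro t hRt
    rw [show (fun x => w x t * G t x) = fun _ : ℂ => (0:ℝ) from
      funext fun x => by rw [hGzero t x (hxtout t hRt x)]; ring]
    simp
  -- measurability in time
  have hkmeasSM : ∀ k : ℕ, StronglyMeasurable (fun t : ℝ => ∫ x, w x t * (χ k x * G t x) + w x t * G3 k t x ∂ν) := by
    intro k
    have hj : Measurable fun q : ℝ × ℂ =>
        w q.2 q.1 * (χ k q.2 * G q.1 q.2) + w q.2 q.1 * G3 k q.1 q.2 := by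
      refine (hwjoint.mul (Measurable.mul ?_ hGjoint)).add (hwjoint.mul (hG3joint k))
      exact (hχs k).continuous.measurable.comp measurable_snd
    exact hj.stronglyMeasurable.integral_prod_right'
  have hhmeasSM : StronglyMeasurable (fun t : ℝ => ∫ x, w x t * G t x ∂ν) :=
    (hwjoint.mul hGjoint).stronglyMeasurable.integral_prod_right'
  set D : ℝ → ℝ := (Set.Ioc (0:ℝ) R).indicator (fun _ => CD) with hDdef
  have hDint : Integrable D (volume.restrict (Set.Ioi (0:ℝ))) := by
    rw [hDdef, integrable_indicator_iff measurableSet_Ioc]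
    refine (integrableOn_const_iff (by simp)).mpr (Or.inr ?_)
    calc (volume.restrict (Set.Ioi (0:ℝ))) (Set.Ioc 0 R) ≤ volume (Set.Ioc (0:ℝ) R) := by
          rw [Measure.restrict_apply' measurableSet_Ioi]; exact measure_mono inter_subset_left
      _ < ⊤ := by rw [Real.volume_Ioc]; exact ENNReal.ofReal_lt_top
  have hDbd : ∀ k : ℕ, ∀ᵐ t ∂(volume.restrict (Set.Ioi (0:ℝ))), ‖∫ x, w x t * (χ k x * G t x) + w x t * G3 k t x ∂ν‖ ≤ D t := by
    intro k
    filter_upwards [ae_restrict_mem measurableSet_Ioi] with t ht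
    rw [Real.norm_eq_abs]
    by_cases htR : t ≤ R
    · have hmem : t ∈ Set.Ioc (0:ℝ) R := ⟨ht, htR⟩
      rw [hDdef, Set.indicator_of_mem hmem]
      exact hkbd k t (le_of_lt ht)
    · rw [hkzero k t (le_of_not_ge htR), hDdef,
        Set.indicator_of_notMem (fun hc => htR hc.2)]
      simp
  have hklim : ∀ᵐ t ∂(volume.restrict (Set.Ioi (0:ℝ))),
      Tendsto (fun k : ℕ => ∫ x, w x t * (χ k x * G t x) + w x t * G3 k t x ∂ν) atTop (nhds (∫ x, w x t * G t x ∂ν)) := by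
    filter_upwards [ae_restrict_mem measurableSet_Ioi] with t ht
    have ht0 : (0:ℝ) ≤ t := le_of_lt ht
    have hp1 : Tendsto (fun k : ℕ => ∫ x, w x t * (χ k x * G t x) ∂ν) atTop
        (nhds (∫ x, w x t * G t x ∂ν)) := by
      refine tendsto_integral_of_dominated_convergence (fun x => |w x t| * CG)
        (fun k => ((hwslice t).mul
          (((hχs k).continuous.measurable).mul (hGslice t))).aestronglyMeasurable)
        ((hwInt t ht0).abs.mul_const CG) (fun k => ?_) ?_
      · filter_upwards [hae0] with x hx0
        rw [Real.norm_eq_abs, abs_mul, abs_mul]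
        refine mul_le_mul_of_nonneg_left ?_ (abs_nonneg _)
        calc |χ k x| * |G t x| ≤ 1 * CG := mul_le_mul
              (by rw [abs_of_nonneg (hχ01 k x).1]; exact (hχ01 k x).2)
              (hGbd t ht0 x hx0) (abs_nonneg _) one_pos.le
          _ = CG := one_mul CG
      · filter_upwards [hae0] with x hx0
        have h9 := ((hχlim x hx0).mul (tendsto_const_nhds (x := G t x))).const_mul (w x t)
        simpa using h9
    have hp2 : Tendsto (fun k : ℕ => ∫ x, w x t * G3 k t x ∂ν) atTop (nhds 0) := by
      refine squeeze_zero_norm (a := fun k : ℕ => Mr * (C3 k *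
        ((volume (Metric.ball (0:ℂ) (3*((k:ℝ)+1)⁻¹))).toReal ^ (1/qq.toReal))))
        (fun k => ?_) hbk
      rw [Real.norm_eq_abs]
      exact (hIG3 k t ht0).2
    have h10 := hp1.add hp2
    rw [show (fun k : ℕ => ∫ x, w x t * (χ k x * G t x) + w x t * G3 k t x ∂ν) = fun k : ℕ =>
      (∫ x, w x t * (χ k x * G t x) ∂ν) + ∫ x, w x t * G3 k t x ∂ν from
      funext fun k => hksplit k t ht0]
    simpa using h10
  have hT1 : Tendsto (fun k : ℕ => ∫ t in Set.Ioi (0:ℝ), ∫ x, w x t * (χ k x * G t x) + w x t * G3 k t x ∂ν) atTop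
      (nhds (∫ t in Set.Ioi (0:ℝ), ∫ x, w x t * G t x ∂ν)) :=
    tendsto_integral_of_dominated_convergence D
      (fun k => (hkmeasSM k).aestronglyMeasurable) hDint hDbd hklim
  have hIk : ∀ k : ℕ, IntegrableOn (fun t : ℝ => ∫ x, w x t * (χ k x * G t x) + w x t * G3 k t x ∂ν) (Set.Ioi (0:ℝ)) volume :=
    fun k => Integrable.mono' hDint (hkmeasSM k).aestronglyMeasurable (hDbd k)
  have hT2 : Tendsto (fun k : ℕ => ∫ t in Set.Ioc (0:ℝ) (((k:ℝ)+1)⁻¹), ∫ x, w x t * (χ k x * G t x) + w x t * G3 k t x ∂ν) atTop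
      (nhds 0) := by
    refine squeeze_zero_norm (a := fun k : ℕ => CD * ((k:ℝ)+1)⁻¹) (fun k => ?_) ?_
    · have hb2 := norm_setIntegral_le_of_norm_le_const (μ := volume)
        (s := Set.Ioc (0:ℝ) (((k:ℝ)+1)⁻¹)) (f := fun t : ℝ => ∫ x, w x t * (χ k x * G t x) + w x t * G3 k t x ∂ν) (C := CD)
        (by rw [Real.volume_Ioc]; exact ENNReal.ofReal_lt_top) (fun t ht => by
          rw [Real.norm_eq_abs]; exact hkbd k t (le_of_lt ht.1))
      refine hb2.trans ?_
      rw [Real.volume_real_Ioc_of_le (hsk k).le, sub_zero]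
    · have h11 := ((tendsto_one_div_add_atTop_nhds_zero_nat (𝕜 := ℝ)).congr
        (fun k : ℕ => by rw [one_div])).const_mul CD
      simpa using h11
  have hsplitT : ∀ k : ℕ, (∫ t in Set.Ioi (((k:ℝ)+1)⁻¹), ∫ x, w x t * (χ k x * G t x) + w x t * G3 k t x ∂ν)
      = (∫ t in Set.Ioi (0:ℝ), ∫ x, w x t * (χ k x * G t x) + w x t * G3 k t x ∂ν) - ∫ t in Set.Ioc (0:ℝ) (((k:ℝ)+1)⁻¹), ∫ x, w x t * (χ k x * G t x) + w x t * G3 k t x ∂ν := by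
    intro k
    have hu2 := setIntegral_union (Ioc_disjoint_Ioi le_rfl) measurableSet_Ioi
      ((hIk k).mono_set Set.Ioc_subset_Ioi_self)
      ((hIk k).mono_set (Set.Ioi_subset_Ioi (hsk k).le))
    rw [Set.Ioc_union_Ioi_eq_Ioi (hsk k).le] at hu2
    linarith
  have hT_time : Tendsto (fun k : ℕ => ∫ t in Set.Ioi (((k:ℝ)+1)⁻¹), ∫ x, w x t * (χ k x * G t x) + w x t * G3 k t x ∂ν) atTop
      (nhds (∫ t in Set.Ioi (0:ℝ), ∫ x, w x t * G t x ∂ν)) := by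
    simp only [hsplitT]
    have h12 := hT1.sub hT2
    simpa using h12
  -- conclusion
  have hT := hT_sp.add hT_time
  have hzero : (fun k : ℕ =>
      (∫ x, w x (((k:ℝ)+1)⁻¹) * (f (x, ((k:ℝ)+1)⁻¹) * χ k x) ∂ν)
        + ∫ t in Set.Ioi (((k:ℝ)+1)⁻¹), ∫ x, w x t * (χ k x * G t x) + w x t * G3 k t x ∂ν) = fun _ : ℕ => (0:ℝ) :=
    funext fun k => hFk k
  rw [hzero] at hT
  exact tendsto_nhds_unique hT tendsto_const_nhds


end
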